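/- Let f, g ∈ ℂ[z] be polynomials, not both zero, and let n = max(deg f, deg g). Then the dimension of the kernel of the 2n×2n resultant matrix R = [[T_f, Z·H_f],[T_g, Z·H_g]] (as a linear map ℂ^{2n} → ℂ^{2n}) equals the degree of gcd(f, g). -/

import Mathlib

open Polynomial Matrix

/-- The `n × n` Hankel matrix of a polynomial `f`: `(H_f)_{jk} = f_{j+k+1}`. -/
noncomputable def Hk (n : ℕ) (f : ℂ[X]) : Matrix (Fin n) (Fin n) ℂ :=
  Matrix.of fun j k => f.coeff ((j : ℕ) + (k : ℕ) + 1)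

/-- The `n × n` upper triangular Toeplitz matrix of a polynomial `f`:
`(T_f)_{jk} = f_{k-j}` if `k ≥ j`, and `0` otherwise. -/
noncomputable def Tp (n : ℕ) (f : ℂ[X]) : Matrix (Fin n) (Fin n) ℂ :=
  Matrix.of fun j k => if (j : ℕ) ≤ (k : ℕ) then f.coeff ((k : ℕ) - (j : ℕ)) else 0

/-- The `n × n` reverse identity matrix `Z`. -/
noncomputable def Rv (n : ℕ) : Matrix (Fin n) (Fin n) ℂ :=
  Matrix.of fun j k => if (j : ℕ) + (k : ℕ) = n - 1 then 1 else 0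

/-- The `n × n` Bezoutian matrix of `f` and `g`: `B = H_f T_g - H_g T_f`. -/
noncomputable def Bz (n : ℕ) (f g : ℂ[X]) : Matrix (Fin n) (Fin n) ℂ :=
  Hk n f * Tp n g - Hk n g * Tp n f

/-- The `2n × 2n` resultant matrix of `f` and `g`:
`R = [[T_f, Z H_f], [T_g, Z H_g]]`. -/
noncomputable def Rs (n : ℕ) (f g : ℂ[X]) : Matrix (Fin n ⊕ Fin n) (Fin n ⊕ Fin n) ℂ :=
  Matrix.fromBlocks (Tp n f) (Rv n * Hk n f) (Tp n g) (Rv n * Hk n g)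

/-! ### Auxiliary material -/

section Aux

open Finset

/-- Coefficients of a "reversed" polynomial sum. -/
lemma coeff_revsum (N off m : ℕ) (v : Fin N → ℂ) :
    (∑ k : Fin N, C (v k) * X ^ (off + N - 1 - (k : ℕ))).coeff m =
      if h : off ≤ m ∧ m < off + N then v ⟨off + N - 1 - m, by omega⟩ else 0 := by
  rw [finset_sum_coeff]
  simp only [coeff_C_mul, coeff_X_pow, mul_ite, mul_one, mul_zero]
  split_ifs with h
  · rw [Finset.sum_eq_single (⟨off + N - 1 - m, by omega⟩ : Fin N)]
    · rw [if_pos (by simp only [Fin.val_mk]; omega)]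
    · intro k _ hk
      rw [if_neg]
      intro he
      exact hk (Fin.ext (by have := k.isLt; simp only [Fin.val_mk]; omega))
    · intro hm; exact absurd (Finset.mem_univ _) hm
  · apply Finset.sum_eq_zero
    intro k _
    rw [if_neg]
    have := k.isLt
    omega

/-- Coefficient of a truncated coefficient sum (range version). -/
lemma coeff_Csum (N : ℕ) (c : ℕ → ℂ) (m : ℕ) :
    (∑ i ∈ Finset.range N, C (c i) * X ^ i).coeff m = if m < N then c m else 0 := by
  rw [finset_sum_coeff]
  simp only [coeff_C_mul, coeff_X_pow, mul_ite, mul_one, mul_zero]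
  rw [Finset.sum_ite_eq (Finset.range N) m c]
  simp only [Finset.mem_range]

/-- Coefficient of a truncated coefficient sum (Fin version). -/
lemma coeff_Csum_fin (N : ℕ) (c : Fin N → ℂ) (m : ℕ) :
    (∑ j : Fin N, C (c j) * X ^ (j : ℕ)).coeff m = if h : m < N then c ⟨m, h⟩ else 0 := by
  rw [finset_sum_coeff]
  simp only [coeff_C_mul, coeff_X_pow, mul_ite, mul_one, mul_zero]
  split_ifs with h
  · rw [Finset.sum_eq_single (⟨m, h⟩ : Fin N)]
    · rw [if_pos rfl]
    · intro k _ hk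
      rw [if_neg]
      intro he
      exact hk (Fin.ext he.symm)
    · intro hm; exact absurd (Finset.mem_univ _) hm
  · apply Finset.sum_eq_zero
    intro k _
    rw [if_neg]
    have := k.isLt
    omega

/-- Vanishing of high coefficients of a product. -/
lemma mul_coeff_zero (p q : ℂ[X]) (a b : ℕ)
    (hp : ∀ i, a < i → p.coeff i = 0) (hq : ∀ i, b < i → q.coeff i = 0) :
    ∀ m, a + b < m → (p * q).coeff m = 0 := by
  intro m hm
  rw [coeff_mul]
  apply Finset.sum_eq_zero
  intro x hx
  rw [Finset.HasAntidiagonal.mem_antidiagonal] at hx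
  rcases lt_or_ge a x.1 with h | h
  · rw [hp _ h, zero_mul]
  · rw [hq _ (by omega), mul_zero]

lemma natDegree_lt_of_coeff {p : ℂ[X]} {N : ℕ}
    (hp : ∀ m, N ≤ m → p.coeff m = 0) (hne : p ≠ 0) : p.natDegree < N := by
  by_contra h
  have h1 := hp p.natDegree (le_of_not_gt h)
  rw [coeff_natDegree] at h1
  exact leadingCoeff_ne_zero.mpr hne h1

/-- Splitting an identity `P + X^n2 Q = P' + X^n2 Q'` with low-degree `P, P'`. -/
lemma split_eq {n2 : ℕ} {P Q P' Q' : ℂ[X]}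
    (hP : ∀ m, n2 ≤ m → P.coeff m = 0) (hP' : ∀ m, n2 ≤ m → P'.coeff m = 0)
    (heq : P + X ^ n2 * Q = P' + X ^ n2 * Q') : P = P' ∧ Q = Q' := by
  have hd : P - P' = X ^ n2 * (Q' - Q) := by linear_combination heq
  have hQ : Q' - Q = 0 := by
    by_contra hne
    have h1 : (P - P').coeff (n2 + (Q' - Q).natDegree) = (Q' - Q).leadingCoeff := by
      rw [hd, mul_comm, coeff_mul_X_pow', if_pos (by omega)]
      rw [show n2 + (Q' - Q).natDegree - n2 = (Q' - Q).natDegree from by omega, coeff_natDegree]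
    rw [coeff_sub, hP _ (by omega), hP' _ (by omega), sub_zero] at h1
    exact leadingCoeff_ne_zero.mpr hne h1.symm
  have hQQ : Q' = Q := sub_eq_zero.mp hQ
  rw [hQQ] at heq
  exact ⟨add_right_cancel heq, hQQ.symm⟩

/-- The polynomial encoded by a kernel vector. -/
noncomputable def Phi (n : ℕ) (w : Fin n ⊕ Fin n → ℂ) : ℂ[X] :=
  (∑ k : Fin n, C (w (Sum.inr k)) * X ^ (0 + n - 1 - (k : ℕ))) +
  (∑ k : Fin n, C (w (Sum.inl k)) * X ^ (n + n - 1 - (k : ℕ)))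

lemma Phi_coeff_low {n : ℕ} (w : Fin n ⊕ Fin n → ℂ) {m : ℕ} (h : m < n) :
    (Phi n w).coeff m = w (Sum.inr ⟨0 + n - 1 - m, by omega⟩) := by
  rw [Phi, coeff_add, coeff_revsum, coeff_revsum,
    dif_pos (⟨Nat.zero_le m, by omega⟩ : 0 ≤ m ∧ m < 0 + n), dif_neg (by omega), add_zero]

lemma Phi_coeff_high {n : ℕ} (w : Fin n ⊕ Fin n → ℂ) {m : ℕ} (h1 : n ≤ m) (h2 : m < n + n) :
    (Phi n w).coeff m = w (Sum.inl ⟨n + n - 1 - m, by omega⟩) := by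
  rw [Phi, coeff_add, coeff_revsum, coeff_revsum, dif_neg (by omega),
    dif_pos (⟨h1, h2⟩ : n ≤ m ∧ m < n + n), zero_add]

lemma Phi_coeff_top {n : ℕ} (w : Fin n ⊕ Fin n → ℂ) {m : ℕ} (h : n + n ≤ m) :
    (Phi n w).coeff m = 0 := by
  rw [Phi, coeff_add, coeff_revsum, coeff_revsum, dif_neg (by omega), dif_neg (by omega),
    add_zero]

/-- `Phi` as a linear map. -/
noncomputable def PhiL (n : ℕ) : (Fin n ⊕ Fin n → ℂ) →ₗ[ℂ] ℂ[X] where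
  toFun := Phi n
  map_add' w w' := by
    simp only [Phi, Pi.add_apply, map_add, add_mul, Finset.sum_add_distrib]
    ring
  map_smul' c w := by
    simp only [Phi, Pi.smul_apply, smul_eq_mul, C_mul, RingHom.id_apply, smul_add,
      Finset.smul_sum, Polynomial.smul_eq_C_mul, mul_assoc]

lemma RvHk_apply (n : ℕ) (f : ℂ[X]) (j k : Fin n) :
    (Rv n * Hk n f) j k = f.coeff (n - 1 - (j : ℕ) + (k : ℕ) + 1) := by
  have hj := j.isLt
  rw [Matrix.mul_apply]
  rw [Finset.sum_eq_single (⟨n - 1 - (j : ℕ), by omega⟩ : Fin n)]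
  · rw [Rv, Hk]
    simp only [Matrix.of_apply, Fin.val_mk]
    rw [if_pos (by omega), one_mul]
  · intro l _ hl
    rw [Rv]
    simp only [Matrix.of_apply]
    rw [if_neg, zero_mul]
    intro he
    exact hl (Fin.ext (by have := l.isLt; simp only [Fin.val_mk]; omega))
  · intro hm; exact absurd (Finset.mem_univ _) hm

/-- The key row formula: rows of the resultant matrix compute coefficients of `f * Phi w`. -/
lemma row_formula (n : ℕ) (f : ℂ[X]) (w : Fin n ⊕ Fin n → ℂ) (j : Fin n) :
    ((∑ k : Fin n, Tp n f j k * w (Sum.inl k)) +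
      ∑ k : Fin n, (Rv n * Hk n f) j k * w (Sum.inr k)) =
      (f * Phi n w).coeff (n + n - 1 - (j : ℕ)) := by
  have hj : (j : ℕ) < n := j.isLt
  have hexp : f * Phi n w =
      (∑ k : Fin n, C (w (Sum.inr k)) * (f * X ^ (0 + n - 1 - (k : ℕ)))) +
      (∑ k : Fin n, C (w (Sum.inl k)) * (f * X ^ (n + n - 1 - (k : ℕ)))) := by
    rw [Phi, mul_add, Finset.mul_sum, Finset.mul_sum]
    congr 1 <;> (apply Finset.sum_congr rfl; intro k _; ring)
  rw [hexp, coeff_add, finset_sum_coeff, finset_sum_coeff]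
  have h1 : (∑ k : Fin n, Tp n f j k * w (Sum.inl k)) =
      ∑ k : Fin n, (C (w (Sum.inl k)) * (f * X ^ (n + n - 1 - (k : ℕ)))).coeff
        (n + n - 1 - (j : ℕ)) := by
    apply Finset.sum_congr rfl
    intro k _
    have hk : (k : ℕ) < n := k.isLt
    rw [coeff_C_mul, coeff_mul_X_pow', Tp]
    simp only [Matrix.of_apply]
    rw [mul_comm]
    congr 1
    by_cases hjk : (j : ℕ) ≤ (k : ℕ)
    · rw [if_pos hjk, if_pos (by omega)]
      congr 1
      omega
    · rw [if_neg hjk, if_neg (by omega)]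
  have h2 : (∑ k : Fin n, (Rv n * Hk n f) j k * w (Sum.inr k)) =
      ∑ k : Fin n, (C (w (Sum.inr k)) * (f * X ^ (0 + n - 1 - (k : ℕ)))).coeff
        (n + n - 1 - (j : ℕ)) := by
    apply Finset.sum_congr rfl
    intro k _
    have hk : (k : ℕ) < n := k.isLt
    rw [coeff_C_mul, coeff_mul_X_pow', RvHk_apply]
    rw [mul_comm]
    congr 1
    rw [if_pos (by omega)]
    congr 1
    omega
  rw [h1, h2, add_comm]

lemma mulVec_inl (n : ℕ) (f g : ℂ[X]) (w : Fin n ⊕ Fin n → ℂ) (j : Fin n) :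
    (Rs n f g).mulVec w (Sum.inl j) = (f * Phi n w).coeff (n + n - 1 - (j : ℕ)) := by
  rw [← row_formula]
  simp only [Rs, Matrix.mulVec, dotProduct, Fintype.sum_sum_type,
    Matrix.fromBlocks_apply₁₁, Matrix.fromBlocks_apply₁₂]

lemma mulVec_inr (n : ℕ) (f g : ℂ[X]) (w : Fin n ⊕ Fin n → ℂ) (j : Fin n) :
    (Rs n f g).mulVec w (Sum.inr j) = (g * Phi n w).coeff (n + n - 1 - (j : ℕ)) := by
  rw [← row_formula]
  simp only [Rs, Matrix.mulVec, dotProduct, Fintype.sum_sum_type,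
    Matrix.fromBlocks_apply₂₁, Matrix.fromBlocks_apply₂₂]

/-- The main algebraic equivalence between the two coefficient-window conditions. -/
lemma window_iff (f g : ℂ[X]) (hfg : f ≠ 0 ∨ g ≠ 0) (n : ℕ)
    (hn : n = max f.natDegree g.natDegree) (W : ℂ[X])
    (hW : ∀ m, n + n ≤ m → W.coeff m = 0) :
    (∀ i, n ≤ i → i < n + n → (f * W).coeff i = 0 ∧ (g * W).coeff i = 0) ↔
      (∀ i, (EuclideanDomain.gcd f g).natDegree ≤ i → i < n + n →
        (EuclideanDomain.gcd f g * W).coeff i = 0) := by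
  rcases eq_or_ne f 0 with rfl | hf
  · rw [EuclideanDomain.gcd_zero_left]
    have hδ : g.natDegree = n := by
      simp only [natDegree_zero, Nat.zero_max] at hn
      omega
    rw [hδ]
    constructor
    · intro h i h1 h2
      exact (h i h1 h2).2
    · intro h i h1 h2
      exact ⟨by simp, h i h1 h2⟩
  rcases eq_or_ne g 0 with rfl | hg
  · rw [EuclideanDomain.gcd_zero_right]
    have hδ : f.natDegree = n := by
      simp only [natDegree_zero, Nat.max_zero] at hn
      omega
    rw [hδ]
    constructor
    · intro h i h1 h2
      exact (h i h1 h2).1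
    · intro h i h1 h2
      exact ⟨h i h1 h2, by simp⟩
  set d := EuclideanDomain.gcd f g with hdd
  have hd : d ≠ 0 := fun h0 => hf (EuclideanDomain.gcd_eq_zero_iff.mp h0).1
  obtain ⟨f₁, hf₁⟩ : d ∣ f := EuclideanDomain.gcd_dvd_left f g
  obtain ⟨g₁, hg₁⟩ : d ∣ g := EuclideanDomain.gcd_dvd_right f g
  have hf₁0 : f₁ ≠ 0 := by
    intro h0; rw [h0, mul_zero] at hf₁; exact hf hf₁
  have hg₁0 : g₁ ≠ 0 := by
    intro h0; rw [h0, mul_zero] at hg₁; exact hg hg₁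
  have hδf : f.natDegree = d.natDegree + f₁.natDegree := by
    have := natDegree_mul hd hf₁0
    rw [← hf₁] at this
    exact this
  have hδg : g.natDegree = d.natDegree + g₁.natDegree := by
    have := natDegree_mul hd hg₁0
    rw [← hg₁] at this
    exact this
  have hfn : f.natDegree ≤ n := by rw [hn]; exact le_max_left _ _
  have hgn : g.natDegree ≤ n := by rw [hn]; exact le_max_right _ _
  have hone : f.natDegree = n ∨ g.natDegree = n := by
    rcases max_choice f.natDegree g.natDegree with h | h
    · left; rw [hn, h]
    · right; rw [hn, h]
  have hcop : IsCoprime f₁ g₁ := by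
    refine ⟨EuclideanDomain.gcdA f g, EuclideanDomain.gcdB f g, ?_⟩
    apply mul_left_cancel₀ hd
    have hb := EuclideanDomain.gcd_eq_gcd_ab f g
    rw [← hdd] at hb
    calc d * (EuclideanDomain.gcdA f g * f₁ + EuclideanDomain.gcdB f g * g₁)
        = f * EuclideanDomain.gcdA f g + g * EuclideanDomain.gcdB f g := by
          rw [hf₁, hg₁]; ring
      _ = d := hb.symm
      _ = d * 1 := (mul_one d).symm
  constructor
  · intro h
    rcases Nat.eq_zero_or_pos n with hn0 | hn1
    · intro i _ h2
      exact absurd h2 (by omega)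
    have hfW : f * W = f₁ * (d * W) := by rw [hf₁]; ring
    have hgW : g * W = g₁ * (d * W) := by rw [hg₁]; ring
    have hEtop : ∀ m, d.natDegree + (n + n - 1) < m → (d * W).coeff m = 0 :=
      mul_coeff_zero d W d.natDegree (n + n - 1)
        (fun i hi => coeff_eq_zero_of_natDegree_lt hi) (fun i hi => hW i (by omega))
    have hf₁E : ∀ m, n + n + n ≤ m → (f₁ * (d * W)).coeff m = 0 := by
      intro m hm
      exact mul_coeff_zero f₁ (d * W) f₁.natDegree (d.natDegree + (n + n - 1))
        (fun i hi => coeff_eq_zero_of_natDegree_lt hi) hEtop m (by omega)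
    have hg₁E : ∀ m, n + n + n ≤ m → (g₁ * (d * W)).coeff m = 0 := by
      intro m hm
      exact mul_coeff_zero g₁ (d * W) g₁.natDegree (d.natDegree + (n + n - 1))
        (fun i hi => coeff_eq_zero_of_natDegree_lt hi) hEtop m (by omega)
    set A1 := ∑ i ∈ Finset.range n, C ((f₁ * (d * W)).coeff i) * X ^ i with hA1
    set B1 := ∑ i ∈ Finset.range n, C ((f₁ * (d * W)).coeff (n + n + i)) * X ^ i with hB1
    set A2 := ∑ i ∈ Finset.range n, C ((g₁ * (d * W)).coeff i) * X ^ i with hA2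
    set B2 := ∑ i ∈ Finset.range n, C ((g₁ * (d * W)).coeff (n + n + i)) * X ^ i with hB2
    have hA1c : ∀ m, n ≤ m → A1.coeff m = 0 := fun m hm => by
      rw [hA1, coeff_Csum, if_neg (by omega)]
    have hB1c : ∀ m, n ≤ m → B1.coeff m = 0 := fun m hm => by
      rw [hB1, coeff_Csum, if_neg (by omega)]
    have hA2c : ∀ m, n ≤ m → A2.coeff m = 0 := fun m hm => by
      rw [hA2, coeff_Csum, if_neg (by omega)]
    have hB2c : ∀ m, n ≤ m → B2.coeff m = 0 := fun m hm => by
      rw [hB2, coeff_Csum, if_neg (by omega)]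
    have hdec1 : f₁ * (d * W) = A1 + X ^ (n + n) * B1 := by
      ext m
      rw [coeff_add, hA1, coeff_Csum, mul_comm (X ^ (n + n)) B1, coeff_mul_X_pow', hB1,
        coeff_Csum]
      by_cases h1 : m < n
      · rw [if_pos h1, if_neg (by omega), add_zero]
      · rw [if_neg h1]
        by_cases h2 : m < n + n
        · rw [if_neg (by omega), add_zero, ← hfW]
          exact (h m (by omega) h2).1
        · by_cases h3 : m < n + n + n
          · rw [if_pos (by omega), if_pos (by omega), zero_add]
            congr 1
            omega
          · rw [hf₁E m (by omega), if_pos (by omega), if_neg (by omega), zero_add]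
    have hdec2 : g₁ * (d * W) = A2 + X ^ (n + n) * B2 := by
      ext m
      rw [coeff_add, hA2, coeff_Csum, mul_comm (X ^ (n + n)) B2, coeff_mul_X_pow', hB2,
        coeff_Csum]
      by_cases h1 : m < n
      · rw [if_pos h1, if_neg (by omega), add_zero]
      · rw [if_neg h1]
        by_cases h2 : m < n + n
        · rw [if_neg (by omega), add_zero, ← hgW]
          exact (h m (by omega) h2).2
        · by_cases h3 : m < n + n + n
          · rw [if_pos (by omega), if_pos (by omega), zero_add]
            congr 1
            omega
          · rw [hg₁E m (by omega), if_pos (by omega), if_neg (by omega), zero_add]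
    have hkey : g₁ * A1 + X ^ (n + n) * (g₁ * B1) = f₁ * A2 + X ^ (n + n) * (f₁ * B2) := by
      have h0 : g₁ * (f₁ * (d * W)) = f₁ * (g₁ * (d * W)) := by ring
      rw [hdec1, hdec2] at h0
      linear_combination h0
    have hgA1 : ∀ m, n + n ≤ m → (g₁ * A1).coeff m = 0 := by
      intro m hm
      exact mul_coeff_zero g₁ A1 g₁.natDegree (n - 1)
        (fun i hi => coeff_eq_zero_of_natDegree_lt hi)
        (fun i hi => hA1c i (by omega)) m (by omega)
    have hfA2 : ∀ m, n + n ≤ m → (f₁ * A2).coeff m = 0 := by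
      intro m hm
      exact mul_coeff_zero f₁ A2 f₁.natDegree (n - 1)
        (fun i hi => coeff_eq_zero_of_natDegree_lt hi)
        (fun i hi => hA2c i (by omega)) m (by omega)
    obtain ⟨hAeq, hBeq⟩ := split_eq hgA1 hfA2 hkey
    obtain ⟨a, ha⟩ : f₁ ∣ A1 := hcop.dvd_of_dvd_mul_left ⟨A2, hAeq⟩
    obtain ⟨b, hbb⟩ : f₁ ∣ B1 := hcop.dvd_of_dvd_mul_left ⟨B2, hBeq⟩
    have hEab : d * W = a + X ^ (n + n) * b := by
      apply mul_left_cancel₀ hf₁0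
      rw [hdec1, ha, hbb]
      ring
    have hA2a : A2 = g₁ * a := by
      apply mul_left_cancel₀ hf₁0
      rw [← hAeq, ha]
      ring
    have hB2b : B2 = g₁ * b := by
      apply mul_left_cancel₀ hf₁0
      rw [← hBeq, hbb]
      ring
    have hadeg : ∀ i, d.natDegree ≤ i → a.coeff i = 0 := by
      rcases eq_or_ne a 0 with rfl | ha0
      · intro i _; simp
      intro i hi
      apply coeff_eq_zero_of_natDegree_lt
      have h1 : f₁.natDegree + a.natDegree < n := by
        rw [← natDegree_mul hf₁0 ha0, ← ha]
        exact natDegree_lt_of_coeff hA1c (by rw [ha]; exact mul_ne_zero hf₁0 ha0)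
      have h2 : g₁.natDegree + a.natDegree < n := by
        rw [← natDegree_mul hg₁0 ha0, ← hA2a]
        exact natDegree_lt_of_coeff hA2c (by rw [hA2a]; exact mul_ne_zero hg₁0 ha0)
      rcases hone with he | he <;> omega
    have hbdeg : ∀ i, d.natDegree ≤ i → b.coeff i = 0 := by
      rcases eq_or_ne b 0 with rfl | hb0
      · intro i _; simp
      intro i hi
      apply coeff_eq_zero_of_natDegree_lt
      have h1 : f₁.natDegree + b.natDegree < n := by
        rw [← natDegree_mul hf₁0 hb0, ← hbb]
        exact natDegree_lt_of_coeff hB1c (by rw [hbb]; exact mul_ne_zero hf₁0 hb0)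
      have h2 : g₁.natDegree + b.natDegree < n := by
        rw [← natDegree_mul hg₁0 hb0, ← hB2b]
        exact natDegree_lt_of_coeff hB2c (by rw [hB2b]; exact mul_ne_zero hg₁0 hb0)
      rcases hone with he | he <;> omega
    intro i h1 h2
    have hxb : (X ^ (n + n) * b).coeff i = 0 := by
      rw [mul_comm, coeff_mul_X_pow', if_neg (by omega)]
    rw [hEab, coeff_add, hadeg i h1, hxb, add_zero]
  · intro h
    have hf₁δ : f₁.natDegree + d.natDegree ≤ n := by omega
    have hg₁δ : g₁.natDegree + d.natDegree ≤ n := by omega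
    intro i h1 h2
    constructor
    · rw [show f * W = f₁ * (d * W) from by rw [hf₁]; ring, coeff_mul]
      apply Finset.sum_eq_zero
      intro x hx
      rw [Finset.HasAntidiagonal.mem_antidiagonal] at hx
      rcases lt_or_ge f₁.natDegree x.1 with hgt | hle
      · rw [coeff_eq_zero_of_natDegree_lt hgt, zero_mul]
      · rw [h x.2 (by omega) (by omega), mul_zero]
    · rw [show g * W = g₁ * (d * W) from by rw [hg₁]; ring, coeff_mul]
      apply Finset.sum_eq_zero
      intro x hx
      rw [Finset.HasAntidiagonal.mem_antidiagonal] at hx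
      rcases lt_or_ge g₁.natDegree x.1 with hgt | hle
      · rw [coeff_eq_zero_of_natDegree_lt hgt, zero_mul]
      · rw [h x.2 (by omega) (by omega), mul_zero]

/-- The comparison map whose kernel coincides with that of the resultant matrix. -/
noncomputable def Kmap (n : ℕ) (d : ℂ[X]) :
    (Fin n ⊕ Fin n → ℂ) →ₗ[ℂ] (Fin (n + n - d.natDegree) → ℂ) :=
  LinearMap.pi fun i =>
    (Polynomial.lcoeff ℂ (d.natDegree + (i : ℕ))).comp
      ((LinearMap.mulLeft ℂ d).comp (PhiL n))

lemma Kmap_apply (n : ℕ) (d : ℂ[X]) (w : Fin n ⊕ Fin n → ℂ)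
    (i : Fin (n + n - d.natDegree)) :
    Kmap n d w i = (d * Phi n w).coeff (d.natDegree + (i : ℕ)) := rfl

lemma ker_eq (f g : ℂ[X]) (hfg : f ≠ 0 ∨ g ≠ 0) (n : ℕ)
    (hn : n = max f.natDegree g.natDegree)
    (hδn : (EuclideanDomain.gcd f g).natDegree ≤ n) :
    LinearMap.ker (Matrix.toLin' (Rs n f g)) =
      LinearMap.ker (Kmap n (EuclideanDomain.gcd f g)) := by
  ext w
  simp only [LinearMap.mem_ker]
  rw [funext_iff, funext_iff]
  simp only [Matrix.toLin'_apply, Pi.zero_apply]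
  constructor
  · intro hker i
    have hwin : ∀ j, n ≤ j → j < n + n →
        (f * Phi n w).coeff j = 0 ∧ (g * Phi n w).coeff j = 0 := by
      intro j h1 h2
      have e1 := hker (Sum.inl ⟨n + n - 1 - j, by omega⟩)
      have e2 := hker (Sum.inr ⟨n + n - 1 - j, by omega⟩)
      rw [mulVec_inl] at e1
      rw [mulVec_inr] at e2
      simp only [Fin.val_mk] at e1 e2
      rw [show n + n - 1 - (n + n - 1 - j) = j from by omega] at e1 e2
      exact ⟨e1, e2⟩
    have hmid := (window_iff f g hfg n hn (Phi n w) (fun m hm => Phi_coeff_top w hm)).mp hwin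
    have hi := i.isLt
    rw [Kmap_apply]
    exact hmid ((EuclideanDomain.gcd f g).natDegree + (i : ℕ)) (by omega) (by omega)
  · intro hker s
    have hwin2 : ∀ j, (EuclideanDomain.gcd f g).natDegree ≤ j → j < n + n →
        (EuclideanDomain.gcd f g * Phi n w).coeff j = 0 := by
      intro j h1 h2
      have e := hker ⟨j - (EuclideanDomain.gcd f g).natDegree, by omega⟩
      rw [Kmap_apply] at e
      rw [show (EuclideanDomain.gcd f g).natDegree +
        ((⟨j - (EuclideanDomain.gcd f g).natDegree, by omega⟩ :
        Fin (n + n - (EuclideanDomain.gcd f g).natDegree)) : ℕ) = j from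
        by simp only [Fin.val_mk]; omega] at e
      exact e
    have hwin := (window_iff f g hfg n hn (Phi n w) (fun m hm => Phi_coeff_top w hm)).mpr hwin2
    cases s with
    | inl j =>
      rw [mulVec_inl]
      have hj := j.isLt
      exact (hwin (n + n - 1 - (j : ℕ)) (by omega) (by omega)).1
    | inr j =>
      rw [mulVec_inr]
      have hj := j.isLt
      exact (hwin (n + n - 1 - (j : ℕ)) (by omega) (by omega)).2

/-- The triangular matrix witnessing surjectivity of `Kmap`. -/
noncomputable def Mtri (n : ℕ) (d : ℂ[X]) :
    Matrix (Fin (n + n - d.natDegree)) (Fin (n + n - d.natDegree)) ℂ :=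
  Matrix.of fun i j =>
    if (j : ℕ) ≤ d.natDegree + (i : ℕ) then d.coeff (d.natDegree + (i : ℕ) - (j : ℕ)) else 0

lemma Mtri_det (n : ℕ) (d : ℂ[X]) (hd : d ≠ 0) : (Mtri n d).det ≠ 0 := by
  rw [Matrix.det_of_upperTriangular]
  · rw [Finset.prod_ne_zero_iff]
    intro i _
    simp only [Mtri, Matrix.of_apply]
    rw [if_pos (by omega), show d.natDegree + (i : ℕ) - (i : ℕ) = d.natDegree from by omega,
      coeff_natDegree]
    exact leadingCoeff_ne_zero.mpr hd
  · intro i j hij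
    have hij' : (j : ℕ) < (i : ℕ) := hij
    simp only [Mtri, Matrix.of_apply]
    rw [if_pos (by omega)]
    exact coeff_eq_zero_of_natDegree_lt (by omega)

/-- The embedding of coefficient vectors. -/
noncomputable def ee (n : ℕ) (d : ℂ[X]) (x : Fin (n + n - d.natDegree) → ℂ) :
    Fin n ⊕ Fin n → ℂ :=
  Sum.elim
    (fun k => if h : n + n - 1 - (k : ℕ) < n + n - d.natDegree then x ⟨_, h⟩ else 0)
    (fun k => if h : 0 + n - 1 - (k : ℕ) < n + n - d.natDegree then x ⟨_, h⟩ else 0)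

lemma Phi_ee (n : ℕ) (d : ℂ[X]) (x : Fin (n + n - d.natDegree) → ℂ) :
    Phi n (ee n d x) = ∑ j : Fin (n + n - d.natDegree), C (x j) * X ^ (j : ℕ) := by
  ext m
  rw [coeff_Csum_fin]
  rcases lt_or_ge m n with h | h
  · rw [Phi_coeff_low _ h]
    simp only [ee, Sum.elim_inr, Fin.val_mk]
    simp only [show 0 + n - 1 - (0 + n - 1 - m) = m from by omega]
  · rcases lt_or_ge m (n + n) with h2 | h2
    · rw [Phi_coeff_high _ h h2]
      simp only [ee, Sum.elim_inl, Fin.val_mk]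
      simp only [show n + n - 1 - (n + n - 1 - m) = m from by omega]
    · rw [Phi_coeff_top _ h2, dif_neg (by omega)]

lemma Kmap_ee (n : ℕ) (d : ℂ[X]) (x : Fin (n + n - d.natDegree) → ℂ)
    (i : Fin (n + n - d.natDegree)) :
    Kmap n d (ee n d x) i = (Mtri n d).mulVec x i := by
  rw [Kmap_apply, Phi_ee, Finset.mul_sum, finset_sum_coeff]
  simp only [Matrix.mulVec, dotProduct, Mtri, Matrix.of_apply]
  apply Finset.sum_congr rfl
  intro j _
  rw [show d * (C (x j) * X ^ (j : ℕ)) = C (x j) * (d * X ^ (j : ℕ)) from by ring,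
    coeff_C_mul, coeff_mul_X_pow', mul_comm]

end Aux

/-- The nullity of the resultant matrix of `f` and `g` (of size `2n`, where
`n = max(deg f, deg g)`) equals the degree of `gcd(f, g)`. -/
theorem resultant_nullity (f g : ℂ[X]) (hfg : f ≠ 0 ∨ g ≠ 0)
    (n : ℕ) (hn : n = max f.natDegree g.natDegree) :
    Module.finrank ℂ (LinearMap.ker (Matrix.toLin' (Rs n f g))) =
      (EuclideanDomain.gcd f g).natDegree := by
  have hδn : (EuclideanDomain.gcd f g).natDegree ≤ n := by
    rcases eq_or_ne f 0 with rfl | hf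
    · rw [EuclideanDomain.gcd_zero_left, hn]
      exact le_max_right _ _
    · calc (EuclideanDomain.gcd f g).natDegree ≤ f.natDegree :=
            Polynomial.natDegree_le_of_dvd (EuclideanDomain.gcd_dvd_left f g) hf
        _ ≤ n := by rw [hn]; exact le_max_left _ _
  have hdne : EuclideanDomain.gcd f g ≠ 0 := by
    intro h0
    obtain ⟨h1, h2⟩ := EuclideanDomain.gcd_eq_zero_iff.mp h0
    rcases hfg with h | h
    · exact h h1
    · exact h h2
  rw [ker_eq f g hfg n hn hδn]
  set d := EuclideanDomain.gcd f g with hdd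
  have hsurj : Function.Surjective (Kmap n d) := by
    intro t
    refine ⟨ee n d ((Mtri n d)⁻¹.mulVec t), funext fun i => ?_⟩
    rw [Kmap_ee, Matrix.mulVec_mulVec,
      Matrix.mul_nonsing_inv _ (isUnit_iff_ne_zero.mpr (Mtri_det n d hdne)),
      Matrix.one_mulVec]
  have hrank := LinearMap.finrank_range_add_finrank_ker (Kmap n d)
  rw [LinearMap.range_eq_top.mpr hsurj, finrank_top] at hrank
  have h1 : Module.finrank ℂ (Fin (n + n - d.natDegree) → ℂ) = n + n - d.natDegree := by
    simp [Module.finrank_fintype_fun_eq_card]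
  have h2 : Module.finrank ℂ (Fin n ⊕ Fin n → ℂ) = n + n := by
    simp [Module.finrank_fintype_fun_eq_card, Fintype.card_sum]
  rw [h1, h2] at hrank
  omega
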